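/- Let X be a tree, g an automorphism of X without edge inversions, and v a vertex. Then g is hyperbolic if and only if d(g⁻¹·v, g·v) > d(v, g·v); equivalently, g is elliptic if and only if d(g⁻¹·v, g·v) ≤ d(v, g·v). Moreover, if g is hyperbolic then its translation length equals d(g⁻¹·v, g·v) − d(v, g·v). -/

import Mathlib

namespace Stmt2Aux

open SimpleGraph Walk

variable {V : Type*} {G : SimpleGraph V}

/-- In a tree, every path realizes the distance. -/
lemma tpl (hT : G.IsTree) {x y : V} (p : G.Walk x y) (hp : p.IsPath) :
    p.length = G.dist x y := by
  obtain ⟨q, hq, hql⟩ := hT.isConnected.exists_path_of_dist x y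
  have h : (⟨p, hp⟩ : G.Path x y) = ⟨q, hq⟩ := hT.IsAcyclic.path_unique _ _
  rw [show p = q from congrArg Subtype.val h, hql]

lemma split (hT : G.IsTree) {x z u : V} (p : G.Walk x z) (hp : p.IsPath)
    (hu : u ∈ p.support) : G.dist x u + G.dist u z = G.dist x z := by
  classical
  have h1 := tpl hT _ (hp.takeUntil hu)
  have h2 := tpl hT _ (hp.dropUntil hu)
  have h3 := tpl hT p hp
  have h4 := congrArg Walk.length (p.take_spec hu)
  rw [Walk.length_append] at h4
  omega

lemma ptOn_aux (hconn : G.Connected) :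
    ∀ {a b : V} (p : G.Walk a b) (i : ℕ), i ≤ p.length →
      ∃ m, G.dist a m ≤ i ∧ G.dist m b ≤ p.length - i := by
  intro a b p
  induction p with
  | @nil u => exact fun i _ => ⟨u, by simp [SimpleGraph.dist_self], by simp [SimpleGraph.dist_self]⟩
  | @cons a c b h p' ih =>
    intro i hi
    cases i with
    | zero =>
      refine ⟨a, by simp, ?_⟩
      simpa using G.dist_le (Walk.cons h p')
    | succ j =>
      obtain ⟨m, hm1, hm2⟩ := ih j (by simp at hi; omega)
      refine ⟨m, ?_, ?_⟩
      · have t1 := hconn.dist_triangle (u := a) (v := c) (w := m)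
        have t2 := G.dist_le (Walk.cons h (Walk.nil : G.Walk c c))
        simp at t2
        omega
      · simp only [Walk.length_cons]
        omega

lemma ptOn (hT : G.IsTree) (x z : V) (i : ℕ) (hi : i ≤ G.dist x z) :
    ∃ m, G.dist x m = i ∧ G.dist x m + G.dist m z = G.dist x z := by
  obtain ⟨p, _, hpl⟩ := hT.isConnected.exists_path_of_dist x z
  obtain ⟨m, hm1, hm2⟩ := ptOn_aux hT.isConnected p i (by omega)
  have htri := hT.isConnected.dist_triangle (u := x) (v := m) (w := z)
  rw [hpl] at hm2
  exact ⟨m, by omega, by omega⟩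

/-- uniqueness of the point at given distance on a geodesic. -/
lemma uniq (hT : G.IsTree) {x z m m' : V}
    (h1 : G.dist x m + G.dist m z = G.dist x z)
    (h2 : G.dist x m' + G.dist m' z = G.dist x z)
    (h3 : G.dist x m = G.dist x m') : m = m' := by
  classical
  obtain ⟨p₁, hp₁, hl₁⟩ := hT.isConnected.exists_path_of_dist x m
  obtain ⟨p₂, hp₂, hl₂⟩ := hT.isConnected.exists_path_of_dist m z
  obtain ⟨q₁, hq₁, hk₁⟩ := hT.isConnected.exists_path_of_dist x m'
  obtain ⟨q₂, hq₂, hk₂⟩ := hT.isConnected.exists_path_of_dist m' z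
  have hP : (p₁.append p₂).IsPath :=
    (p₁.append p₂).isPath_of_length_eq_dist (by rw [Walk.length_append]; omega)
  have hQ : (q₁.append q₂).IsPath :=
    (q₁.append q₂).isPath_of_length_eq_dist (by rw [Walk.length_append]; omega)
  have heq : p₁.append p₂ = q₁.append q₂ := by
    have := hT.IsAcyclic.path_unique (⟨p₁.append p₂, hP⟩ : G.Path x z) ⟨q₁.append q₂, hQ⟩
    exact congrArg Subtype.val this
  have hm' : m' ∈ (p₁.append p₂).support := by
    rw [heq]
    exact Walk.mem_support_append_iff _ _ |>.2 (Or.inr q₂.start_mem_support)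
  rcases (Walk.mem_support_append_iff _ _).1 hm' with hmem | hmem
  · have hs := split hT p₁ hp₁ hmem
    have h0 : G.dist m' m = 0 := by omega
    exact ((hT.isConnected.dist_eq_zero_iff).1 h0).symm
  · have hs := split hT p₂ hp₂ hmem
    have h0 : G.dist m m' = 0 := by omega
    exact (hT.isConnected.dist_eq_zero_iff).1 h0

lemma aux_first (S : Set V) :
    ∀ {x y : V} (p : G.Walk x y), y ∈ S →
    ∃ (m : V) (r₁ : G.Walk x m) (r₂ : G.Walk m y),
      r₁.append r₂ = p ∧ m ∈ S ∧ ∀ u ∈ r₁.support, u ∈ S → u = m := by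
  classical
  intro x y p
  induction p with
  | nil =>
    intro hy
    refine ⟨_, Walk.nil, Walk.nil, rfl, hy, ?_⟩
    intro u hu _
    rw [Walk.support_nil, List.mem_singleton] at hu
    exact hu
  | @cons a c b h p' ih =>
    intro hy
    by_cases hx : a ∈ S
    · refine ⟨a, Walk.nil, Walk.cons h p', rfl, hx, ?_⟩
      intro u hu _
      rw [Walk.support_nil, List.mem_singleton] at hu
      exact hu
    · obtain ⟨m, r₁, r₂, happ, hm, havoid⟩ := ih hy
      refine ⟨m, Walk.cons h r₁, r₂, by rw [Walk.cons_append, happ], hm, ?_⟩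
      intro u hu huS
      rw [Walk.support_cons, List.mem_cons] at hu
      rcases hu with rfl | hu
      · exact absurd huS hx
      · exact havoid u hu huS

/-- median existence in a tree -/
lemma med (hT : G.IsTree) (x y z : V) :
    ∃ m, (G.dist x m + G.dist m y = G.dist x y) ∧
      (G.dist y m + G.dist m z = G.dist y z) ∧
      (G.dist x m + G.dist m z = G.dist x z) := by
  classical
  obtain ⟨p, hp, hpl⟩ := hT.isConnected.exists_path_of_dist x y
  obtain ⟨q, hq, hql⟩ := hT.isConnected.exists_path_of_dist y z
  obtain ⟨m, r₁, r₂, happ, hm, havoid⟩ :=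
    aux_first {u | u ∈ q.support} p q.start_mem_support
  have hmq : m ∈ q.support := hm
  have hp' : (r₁.append r₂).IsPath := happ ▸ hp
  have hr₁ : r₁.IsPath := hp'.of_append_left
  have hr₂ : r₂.IsPath := hp'.of_append_right
  have t1 := tpl hT r₁ hr₁
  have t2 := tpl hT r₂ hr₂
  have hlen : r₁.length + r₂.length = p.length := by
    rw [← Walk.length_append, happ]
  have hxy : G.dist x m + G.dist m y = G.dist x y := by omega
  have hyz : G.dist y m + G.dist m z = G.dist y z := split hT q hq hmq
  refine ⟨m, hxy, hyz, ?_⟩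
  have hdrop : (q.dropUntil m hmq).IsPath := hq.dropUntil hmq
  have hPath : (r₁.append (q.dropUntil m hmq)).IsPath := by
    rw [Walk.isPath_def, Walk.support_append, List.nodup_append]
    refine ⟨hr₁.support_nodup, hdrop.support_nodup.tail, ?_⟩
    intro u hu w hu' huw
    subst huw
    have hu'' : u ∈ (q.dropUntil m hmq).support := List.mem_of_mem_tail hu'
    have hqmem : u ∈ q.support := Walk.support_dropUntil_subset q hmq hu''
    have heq : u = m := havoid u hu hqmem
    subst heq
    have hnd := hdrop.support_nodup
    rw [Walk.support_eq_cons, List.nodup_cons] at hnd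
    exact hnd.1 hu'
  have hfin := tpl hT _ hPath
  rw [Walk.length_append, tpl hT r₁ hr₁, tpl hT _ hdrop] at hfin
  exact hfin



/-- if `b` and `c` both lie between `a` and `z`, with `b` closer, then `b` lies
between `a` and `c`. -/
lemma btwmid (hT : G.IsTree) {a b c z : V}
    (hb : G.dist a b + G.dist b z = G.dist a z)
    (hc : G.dist a c + G.dist c z = G.dist a z)
    (hle : G.dist a b ≤ G.dist a c) :
    G.dist a b + G.dist b c = G.dist a c := by
  obtain ⟨y, hy1, hy2⟩ := ptOn hT a c (G.dist a b) hle
  have t1 := hT.isConnected.dist_triangle (u := y) (v := c) (w := z)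
  have t2 := hT.isConnected.dist_triangle (u := a) (v := y) (w := z)
  have hyz : G.dist a y + G.dist y z = G.dist a z := by omega
  have : b = y := uniq hT hb hyz (hy1.symm)
  subst this
  omega

/-- betweenness transitivity: `a-b-c` and `a-c-e` give `a-b-e` and `b-c-e`. -/
lemma btrans (hconn : G.Connected) {a b c e : V}
    (h1 : G.dist a b + G.dist b c = G.dist a c)
    (h2 : G.dist a c + G.dist c e = G.dist a e) :
    G.dist a b + G.dist b e = G.dist a e ∧
      G.dist b c + G.dist c e = G.dist b e := by
  have t1 := hconn.dist_triangle (u := b) (v := c) (w := e)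
  have t2 := hconn.dist_triangle (u := a) (v := b) (w := e)
  omega

/-- gluing: `a-x-y`, `x-y-z`, `x≠y` imply `a-y-z`. -/
lemma hglue (hT : G.IsTree) {a x y z : V}
    (h1 : G.dist a x + G.dist x y = G.dist a y)
    (h2 : G.dist x y + G.dist y z = G.dist x z)
    (hne : 1 ≤ G.dist x y) :
    G.dist a y + G.dist y z = G.dist a z := by
  obtain ⟨mm, hm1, hm2, hm3⟩ := med hT a y z
  -- s := dist mm y
  have hcomm : G.dist mm y = G.dist y mm := G.dist_comm
  have hxm : G.dist x mm = G.dist a y - G.dist a x - G.dist y mm ∨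
      G.dist x mm = G.dist a x + G.dist y mm - G.dist a y := by
    rcases le_or_gt (G.dist a x) (G.dist a mm) with hle | hlt
    · left
      have h5 := btwmid hT (b := x) (c := mm) (z := y)
        (by omega) (by omega) hle
      omega
    · right
      have h5 := btwmid hT (b := mm) (c := x) (z := y)
        (by omega) (by omega) (le_of_lt hlt)
      have h6 : G.dist mm x = G.dist x mm := G.dist_comm
      omega
  have hc2 : G.dist x mm = G.dist mm x := G.dist_comm
  have t1 := hT.isConnected.dist_triangle (u := x) (v := mm) (w := z)
  have t2 := hT.isConnected.dist_triangle (u := a) (v := x) (w := y)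
  have t3 := hT.isConnected.dist_triangle (u := a) (v := y) (w := z)
  have hs0 : G.dist y mm = 0 := by rcases hxm with h | h <;> omega
  have : y = mm := (hT.isConnected.dist_eq_zero_iff).1 hs0
  subst this
  omega



lemma iso_dist (hconn : G.Connected) (g : V ≃ V)
    (hg : ∀ a b, G.Adj (g a) (g b) ↔ G.Adj a b) (x y : V) :
    G.dist (g x) (g y) = G.dist x y := by
  have key : ∀ (e : V ≃ V), (∀ a b, G.Adj a b → G.Adj (e a) (e b)) →
      ∀ x y, G.dist (e x) (e y) ≤ G.dist x y := by
    intro e he x y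
    obtain ⟨p, _, hpl⟩ := hconn.exists_path_of_dist x y
    have h := G.dist_le (p.map (⟨(e : V → V), fun {a b} h => he a b h⟩ : G →g G))
    rwa [Walk.length_map, hpl] at h
  refine le_antisymm (key g (fun a b h => (hg a b).mpr h) x y) ?_
  have h2 := key g.symm
    (fun a b h => (hg (g.symm a) (g.symm b)).mp (by simpa using h)) (g x) (g y)
  simpa using h2

end Stmt2Aux


/-- For an automorphism `g` of a tree without edge inversions and a
vertex `v`: `g` is hyperbolic (fixes no vertex) iff `d(g⁻¹ v, g v) > d(v, g v)`;
equivalently `g` is elliptic iff `d(g⁻¹ v, g v) ≤ d(v, g v)`. Moreover, if `g` is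
hyperbolic, its translation length `min_u d(u, g u)` equals
`d(g⁻¹ v, g v) − d(v, g v)`. -/
theorem stmt_2 {V : Type*} (G : SimpleGraph V) (hT : G.IsTree)
    (g : V ≃ V) (hg : ∀ v w, G.Adj (g v) (g w) ↔ G.Adj v w)
    (hnoinv : ∀ v w, G.Adj v w → ¬(g v = w ∧ g w = v)) (v : V) :
    ((∀ w, g w ≠ w) ↔ G.dist (g.symm v) (g v) > G.dist v (g v)) ∧
    ((∃ w, g w = w) ↔ G.dist (g.symm v) (g v) ≤ G.dist v (g v)) ∧
    ((∀ w, g w ≠ w) →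
      sInf (Set.range fun u => G.dist u (g u)) =
        G.dist (g.symm v) (g v) - G.dist v (g v)) := by
  classical
  have conn := hT.isConnected
  have isom : ∀ x y : V, G.dist (g x) (g y) = G.dist x y :=
    Stmt2Aux.iso_dist conn g hg
  obtain ⟨m, hm1, hm2, hm3⟩ := Stmt2Aux.med hT v (g v) (g (g v))
  have hcomm1 : G.dist (g v) m = G.dist m (g v) := G.dist_comm
  have hgg : G.dist (g v) (g (g v)) = G.dist v (g v) := isom v (g v)
  have hkD : G.dist m (g v) ≤ G.dist v (g v) := by omega
  have hvg2 : G.dist v (g (g v)) =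
      (G.dist v (g v) - G.dist m (g v)) + (G.dist v (g v) - G.dist m (g v)) := by
    omega
  have hsymm : G.dist (g.symm v) (g v) = G.dist v (g (g v)) := by
    have h := isom (g.symm v) (g v)
    rw [Equiv.apply_symm_apply] at h
    exact h.symm
  -- the key rigid lemma: for j ≤ k, the point at distance j from v on [v, gv]
  -- is mapped by g to the point at distance D - j from v on [v, gv].
  have gxj : ∀ j ≤ G.dist m (g v), ∀ p q : V, G.dist v p = j →
      G.dist v p + G.dist p (g v) = G.dist v (g v) →
      G.dist v q = G.dist v (g v) - j →
      G.dist v q + G.dist q (g v) = G.dist v (g v) → g p = q := by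
    intro j hj p q hp1 hp2 hq1 hq2
    have hqgv : G.dist q (g v) = j := by omega
    have c1 : G.dist (g v) q = G.dist q (g v) := G.dist_comm
    have c2 : G.dist (g v) v = G.dist v (g v) := G.dist_comm
    have c3 : G.dist q v = G.dist v q := G.dist_comm
    have c4 : G.dist m v = G.dist v m := G.dist_comm
    have bqm : G.dist (g v) q + G.dist q m = G.dist (g v) m :=
      Stmt2Aux.btwmid hT (a := g v) (b := q) (c := m) (z := v)
        (by omega) (by omega) (by omega)
    have bq2 : G.dist (g v) q + G.dist q (g (g v)) = G.dist (g v) (g (g v)) :=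
      (Stmt2Aux.btrans conn bqm hm2).1
    have bgp : G.dist (g v) (g p) + G.dist (g p) (g (g v)) =
        G.dist (g v) (g (g v)) := by
      have h := hp2
      rw [← isom v p, ← isom p (g v), ← isom v (g v)] at h
      exact h
    have dgp : G.dist (g v) (g p) = j := (isom v p).trans hp1
    exact Stmt2Aux.uniq hT bgp bq2 (by omega)
  -- dichotomy: if 2k ≥ D, there is a fixed point.
  have dich : G.dist v (g v) ≤ 2 * G.dist m (g v) → ∃ w, g w = w := by
    intro h2k
    by_cases hD0 : G.dist v (g v) = 0
    · exact ⟨v, ((conn.dist_eq_zero_iff).1 hD0).symm⟩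
    rcases Nat.even_or_odd (G.dist v (g v)) with ⟨j, hj⟩ | ⟨j, hj⟩
    · obtain ⟨b, hb1, hb2⟩ := Stmt2Aux.ptOn hT v (g v) j (by omega)
      exact ⟨b, gxj j (by omega) b b hb1 hb2 (by omega) hb2⟩
    · obtain ⟨b₁, hb11, hb12⟩ := Stmt2Aux.ptOn hT v (g v) j (by omega)
      obtain ⟨b₂, hb21, hb22⟩ := Stmt2Aux.ptOn hT v (g v) (j + 1) (by omega)
      have hgb1 : g b₁ = b₂ := gxj j (by omega) b₁ b₂ hb11 hb12 (by omega) hb22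
      have hgb2 : g b₂ = b₁ := gxj (j + 1) (by omega) b₂ b₁ hb21 hb22 (by omega) hb12
      have hd12 : G.dist b₁ b₂ = 1 := by
        have := Stmt2Aux.btwmid hT (a := v) (b := b₁) (c := b₂) (z := g v)
          hb12 hb22 (by omega)
        omega
      exact absurd ⟨hgb1, hgb2⟩ (hnoinv b₁ b₂ (SimpleGraph.dist_eq_one_iff_adj.1 hd12))
  -- elliptic implies short
  have ell : (∃ w, g w = w) → G.dist v (g (g v)) ≤ G.dist v (g v) := by
    rintro ⟨w, hw⟩
    obtain ⟨m', hn1, hn2, hn3⟩ := Stmt2Aux.med hT v w (g v)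
    have hwgv : G.dist w (g v) = G.dist w v := by
      conv_lhs => rw [← hw]
      exact isom w v
    have d1 : G.dist w m' = G.dist m' w := G.dist_comm
    have d2 : G.dist m' v = G.dist v m' := G.dist_comm
    have d3 : G.dist w v = G.dist v w := G.dist_comm
    have hgm : g m' = m' := by
      have bb : G.dist w m' + G.dist m' v = G.dist w v := by omega
      have bb2 : G.dist (g w) (g m') + G.dist (g m') (g v) = G.dist (g w) (g v) := by
        rw [isom w m', isom m' v, isom w v]; exact bb
      rw [hw] at bb2
      have hdw : G.dist w (g m') = G.dist w m' := by
        have h := isom w m'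
        rw [hw] at h
        exact h
      exact Stmt2Aux.uniq hT (by omega : G.dist w (g m') + G.dist (g m') (g v) = G.dist w (g v))
        hn2 hdw
    have e1 : G.dist m' (g (g v)) = G.dist m' (g v) := by
      have h := isom (g m') (g v)
      rw [hgm, hgm] at h
      exact h
    have t := conn.dist_triangle (u := v) (v := m') (w := g (g v))
    omega
  have hyper_lt : (∀ w, g w ≠ w) → 2 * G.dist m (g v) < G.dist v (g v) := by
    intro hyp
    by_contra h
    push_neg at h
    obtain ⟨w, hw⟩ := dich (by omega)
    exact hyp w hw
  refine ⟨⟨?_, ?_⟩, ⟨fun h => by have := ell h; omega, ?_⟩, ?_⟩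
  · intro hyp
    have := hyper_lt hyp
    omega
  · intro hgt w hw
    have := ell ⟨w, hw⟩
    omega
  · intro hle
    rw [hsymm] at hle
    exact dich (by omega)
  -- Part 3: translation length
  intro hyp
  have hk2 : 2 * G.dist m (g v) < G.dist v (g v) := hyper_lt hyp
  obtain ⟨a, ha1, ha2⟩ := Stmt2Aux.ptOn hT v (g v) (G.dist m (g v)) (by omega)
  have hga : g a = m := gxj (G.dist m (g v)) le_rfl a m ha1 ha2 (by omega) (by omega)
  have hdam : G.dist a m = G.dist v (g v) - 2 * G.dist m (g v) := by
    have := Stmt2Aux.btwmid hT (a := v) (b := a) (c := m) (z := g v) ha2 hm1 (by omega)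
    omega
  have hgvgm : G.dist (g v) (g m) = G.dist v m := isom v m
  have him : G.dist (g v) (g m) + G.dist (g m) (g (g v)) = G.dist (g v) (g (g v)) := by
    have h := hm1
    rw [← isom v m, ← isom m (g v), ← isom v (g v)] at h
    exact h
  have hmgm : G.dist m (g m) = G.dist v (g v) - 2 * G.dist m (g v) := by
    have := Stmt2Aux.btwmid hT (a := g v) (b := m) (c := g m) (z := g (g v))
      hm2 him (by omega)
    omega
  -- a is on the axis: Btw a m (g m)
  obtain ⟨m2, hq1, hq2, hq3⟩ := Stmt2Aux.med hT a m (g m)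
  have cm1 : G.dist m2 m = G.dist m m2 := G.dist_comm
  have cm2 : G.dist (g v) m2 = G.dist m2 (g v) := G.dist_comm
  have hgmg2 : G.dist (g m) (g (g v)) = G.dist m (g v) := isom m (g v)
  have tr1 := conn.dist_triangle (u := v) (v := a) (w := m2)
  have tr2 := conn.dist_triangle (u := m2) (v := m) (w := g v)
  have tr3 := conn.dist_triangle (u := v) (v := m2) (w := g v)
  have tr4 := conn.dist_triangle (u := g v) (v := m) (w := m2)
  have tr5 := conn.dist_triangle (u := m2) (v := g m) (w := g (g v))
  have tr6 := conn.dist_triangle (u := g v) (v := m2) (w := g (g v))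
  have tr7 := conn.dist_triangle (u := v) (v := m2) (w := g (g v))
  have cm3 : G.dist m (g v) = G.dist (g v) m := G.dist_comm
  have cm4 : G.dist m2 (g m) = G.dist (g m) m2 := G.dist_comm
  have ht0 : G.dist m m2 = 0 := by omega
  have hm2m : m2 = m := ((conn.dist_eq_zero_iff).1 ht0).symm
  rw [hm2m] at hq3
  -- axis : G.dist a m + G.dist m (g m) = G.dist a (g m)
  have hL1 : 1 ≤ G.dist a m := by omega
  -- iterates
  have iterIso : ∀ (n : ℕ) (x y : V),
      G.dist ((⇑g)^[n] x) ((⇑g)^[n] y) = G.dist x y := by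
    intro n
    induction n with
    | zero => intro x y; simp
    | succ n ih =>
      intro x y
      rw [Function.iterate_succ_apply', Function.iterate_succ_apply', isom]
      exact ih x y
  have hdaga : G.dist a (g a) = G.dist v (g v) - 2 * G.dist m (g v) := by
    rw [hga]; exact hdam
  have baseBtw : G.dist a (g a) + G.dist (g a) (g (g a)) = G.dist a (g (g a)) := by
    rw [hga]; exact hq3
  have dgn : ∀ n : ℕ,
      G.dist a ((⇑g)^[n] a) = n * (G.dist v (g v) - 2 * G.dist m (g v)) ∧
      G.dist a ((⇑g)^[n] a) + G.dist ((⇑g)^[n] a) ((⇑g)^[n + 1] a) =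
        G.dist a ((⇑g)^[n + 1] a) := by
    intro n
    induction n with
    | zero => constructor <;> simp [SimpleGraph.dist_self]
    | succ n ih =>
      have hstep : G.dist ((⇑g)^[n] a) ((⇑g)^[n + 1] a) =
          G.dist v (g v) - 2 * G.dist m (g v) := by
        rw [Function.iterate_succ_apply]
        exact (iterIso n a (g a)).trans hdaga
      have hfirst : G.dist a ((⇑g)^[n + 1] a) =
          (n + 1) * (G.dist v (g v) - 2 * G.dist m (g v)) := by
        have h1 := ih.1
        have h2 := ih.2
        rw [Nat.succ_mul]
        omega
      refine ⟨hfirst, ?_⟩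
      have hbase2 : G.dist ((⇑g)^[n] a) ((⇑g)^[n + 1] a) +
          G.dist ((⇑g)^[n + 1] a) ((⇑g)^[n + 2] a) =
          G.dist ((⇑g)^[n] a) ((⇑g)^[n + 2] a) := by
        have hb := baseBtw
        rw [← iterIso n a (g a), ← iterIso n (g a) (g (g a)), ← iterIso n a (g (g a))] at hb
        simpa only [← Function.iterate_succ_apply] using hb
      exact Stmt2Aux.hglue hT ih.2 hbase2 (by omega)
  have dlin : ∀ (n : ℕ) (u : V), G.dist u ((⇑g)^[n] u) ≤ n * G.dist u (g u) := by
    intro n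
    induction n with
    | zero => intro u; simp [SimpleGraph.dist_self]
    | succ n ih =>
      intro u
      have t := conn.dist_triangle (u := u) (v := g u) (w := (⇑g)^[n + 1] u)
      have h1 : G.dist (g u) ((⇑g)^[n + 1] u) = G.dist (g u) ((⇑g)^[n] (g u)) := by
        rw [Function.iterate_succ_apply]
      have h2 := ih (g u)
      rw [isom u (g u)] at h2
      rw [Nat.succ_mul]
      omega
  have lb : ∀ u, G.dist v (g v) - 2 * G.dist m (g v) ≤ G.dist u (g u) := by
    intro u
    by_contra hlt
    push_neg at hlt
    have e1 := (dgn (2 * G.dist a u + 1)).1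
    have tA := conn.dist_triangle (u := a) (v := (⇑g)^[2 * G.dist a u + 1] u)
      (w := (⇑g)^[2 * G.dist a u + 1] a)
    have tB := conn.dist_triangle (u := a) (v := u)
      (w := (⇑g)^[2 * G.dist a u + 1] u)
    have e2 : G.dist ((⇑g)^[2 * G.dist a u + 1] u) ((⇑g)^[2 * G.dist a u + 1] a) =
        G.dist u a := iterIso _ u a
    have e3 := dlin (2 * G.dist a u + 1) u
    have cmu : G.dist u a = G.dist a u := G.dist_comm
    have key : (2 * G.dist a u + 1) * (G.dist v (g v) - 2 * G.dist m (g v)) ≤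
        2 * G.dist a u + (2 * G.dist a u + 1) * G.dist u (g u) := by omega
    have key2 : (2 * G.dist a u + 1) * (G.dist u (g u) + 1) ≤
        (2 * G.dist a u + 1) * (G.dist v (g v) - 2 * G.dist m (g v)) :=
      Nat.mul_le_mul_left _ (by omega)
    rw [Nat.mul_add, Nat.mul_one] at key2
    omega
  have hmem : (G.dist v (g v) - 2 * G.dist m (g v)) ∈
      Set.range (fun u => G.dist u (g u)) := ⟨a, by simpa using hdaga⟩
  have hinf : sInf (Set.range fun u => G.dist u (g u)) =
      G.dist v (g v) - 2 * G.dist m (g v) := by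
    refine le_antisymm (Nat.sInf_le hmem) ?_
    obtain ⟨u, hu⟩ := Nat.sInf_mem (⟨_, hmem⟩ :
      (Set.range fun u => G.dist u (g u)).Nonempty)
    rw [← hu]
    exact lb u
  rw [hinf, hsymm]
  omega
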